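/- For any hypergraph H with no isolated vertices, the maximum length of a legal transversal sequence equals the maximum length of an edge covering sequence, i.e., τ_gr(H) = ρ_gr(H). -/

import Mathlib

open Finset

variable {X : Type*}

/-- A legal edge sequence of the hypergraph with edge family `E`. -/
def IsLegalEdgeSeq (E : Finset (Finset X)) (L : List (Finset X)) : Prop :=
  (∀ C ∈ L, C ∈ E) ∧ ∀ i : Fin L.length, ∃ x ∈ L.get i,
    ∀ j : Fin L.length, j < i → x ∉ L.get j

/-- An edge covering sequence: a legal edge sequence whose union is the whole vertex set. -/
def IsEdgeCoverSeq (E : Finset (Finset X)) (L : List (Finset X)) : Prop :=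
  IsLegalEdgeSeq E L ∧ ∀ x : X, ∃ C ∈ L, x ∈ C

/-- The Grundy cover number `ρ_gr`: maximum length of an edge covering sequence. -/
noncomputable def rhoGr (E : Finset (Finset X)) : ℕ :=
  sSup {n | ∃ L : List (Finset X), IsEdgeCoverSeq E L ∧ L.length = n}

/-- A legal transversal sequence of the hypergraph with edge family `E`. -/
def IsLegalTransversalSeq (E : Finset (Finset X)) (S : List X) : Prop :=
  ∀ i : Fin S.length, ∃ C ∈ E, S.get i ∈ C ∧ ∀ j : Fin S.length, j < i → S.get j ∉ C

/-- `τ_gr`: maximum length of a legal transversal sequence. -/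
noncomputable def tauGr (E : Finset (Finset X)) : ℕ :=
  sSup {n | ∃ S : List X, IsLegalTransversalSeq E S ∧ S.length = n}

section Aux

variable [Fintype X] [DecidableEq X] {E : Finset (Finset X)}

set_option linter.unusedSectionVars false

/-- The private vertices of a legal edge sequence are distinct, so its length is bounded. -/
lemma legal_length_le {L : List (Finset X)} (hL : IsLegalEdgeSeq E L) :
    L.length ≤ Fintype.card X := by
  choose x hx hpriv using hL.2
  have hinj : Function.Injective x := by
    intro i j h
    by_contra hne
    rcases lt_or_gt_of_ne (Fin.val_ne_of_ne hne) with hlt | hlt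
    · exact hpriv j i hlt (h ▸ hx i)
    · exact hpriv i j hlt (h ▸ hx j)
  simpa using Fintype.card_le_of_injective x hinj

/-- The vertices of a legal transversal sequence are distinct, so its length is bounded. -/
lemma transversal_length_le {S : List X} (hS : IsLegalTransversalSeq E S) :
    S.length ≤ Fintype.card X := by
  choose C hCE hmem hpriv using hS
  have hinj : Function.Injective S.get := by
    intro i j h
    by_contra hne
    rcases lt_or_gt_of_ne (Fin.val_ne_of_ne hne) with hlt | hlt
    · exact hpriv j i hlt (h ▸ hmem j)
    · exact hpriv i j hlt (h.symm ▸ hmem i)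
  simpa using Fintype.card_le_of_injective S.get hinj

/-- Appending an edge containing a fresh vertex keeps an edge sequence legal. -/
lemma legal_append {L : List (Finset X)} (hL : IsLegalEdgeSeq E L) {C : Finset X}
    (hCE : C ∈ E) {x : X} (hxC : x ∈ C) (hnew : ∀ D ∈ L, x ∉ D) :
    IsLegalEdgeSeq E (L ++ [C]) := by
  constructor
  · intro D hD
    rcases List.mem_append.1 hD with h | h
    · exact hL.1 D h
    · simp only [List.mem_singleton] at h; exact h ▸ hCE
  · intro i
    have hi : (i : ℕ) < L.length + 1 := by simpa using i.isLt
    by_cases h : (i : ℕ) < L.length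
    · obtain ⟨y, hy, hy'⟩ := hL.2 ⟨i, h⟩
      refine ⟨y, ?_, ?_⟩
      · have : (L ++ [C]).get i = L.get ⟨i, h⟩ := by
          simp [List.get_eq_getElem, List.getElem_append_left h]
        rw [this]; exact hy
      · intro j hj
        have hj' : (j : ℕ) < L.length := lt_trans hj h
        have : (L ++ [C]).get j = L.get ⟨j, hj'⟩ := by
          simp [List.get_eq_getElem, List.getElem_append_left hj']
        rw [this]
        exact hy' ⟨j, hj'⟩ hj
    · have hieq : (i : ℕ) = L.length := by omega
      refine ⟨x, ?_, ?_⟩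
      · have : (L ++ [C]).get i = C := by
          rw [List.get_eq_getElem, List.getElem_append_right (le_of_not_gt h)]
          simp [hieq]
        rw [this]; exact hxC
      · intro j hj
        have hj' : (j : ℕ) < L.length := by
          have := (Fin.lt_def).1 hj; omega
        have : (L ++ [C]).get j = L.get ⟨j, hj'⟩ := by
          simp [List.get_eq_getElem, List.getElem_append_left hj']
        rw [this]
        exact hnew _ (List.get_mem L ⟨j, hj'⟩)

/-- Any legal edge sequence extends to an edge covering sequence. -/
lemma extend_to_cover (hiso : ∀ x : X, ∃ C ∈ E, x ∈ C) :
    ∀ (k : ℕ) (L : List (Finset X)), IsLegalEdgeSeq E L →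
      (univ.filter (fun y => ∀ D ∈ L, y ∉ D)).card = k →
      ∃ M, IsEdgeCoverSeq E M ∧ L.length ≤ M.length := by
  intro k
  induction k using Nat.strong_induction_on with
  | _ k ih =>
    intro L hL hcard
    rcases Nat.eq_zero_or_pos k with h0 | hpos
    · refine ⟨L, ⟨hL, ?_⟩, le_refl _⟩
      intro y
      by_contra hcon
      push_neg at hcon
      have hy : y ∈ univ.filter (fun y => ∀ D ∈ L, y ∉ D) :=
        mem_filter.2 ⟨mem_univ _, hcon⟩
      rw [h0] at hcard
      rw [card_eq_zero.1 hcard] at hy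
      exact absurd hy (notMem_empty _)
    · obtain ⟨x, hx⟩ := card_pos.1 (hcard ▸ hpos)
      obtain ⟨C, hCE, hxC⟩ := hiso x
      have hxnew : ∀ D ∈ L, x ∉ D := (mem_filter.1 hx).2
      have hL' := legal_append hL hCE hxC hxnew
      have hsub : univ.filter (fun y => ∀ D ∈ L ++ [C], y ∉ D) ⊆
          univ.filter (fun y => ∀ D ∈ L, y ∉ D) := by
        intro y hy
        exact mem_filter.2 ⟨mem_univ _,
          fun D hD => (mem_filter.1 hy).2 D (List.mem_append_left _ hD)⟩
      have hxnot : x ∉ univ.filter (fun y => ∀ D ∈ L ++ [C], y ∉ D) := by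
        intro hmem
        exact (mem_filter.1 hmem).2 C (by simp) hxC
      have hlt : (univ.filter (fun y => ∀ D ∈ L ++ [C], y ∉ D)).card < k := by
        rw [← hcard]
        exact card_lt_card (Finset.ssubset_def.2 ⟨hsub, fun h => hxnot (h hx)⟩)
      obtain ⟨M, hM, hle⟩ := ih _ hlt (L ++ [C]) hL' rfl
      refine ⟨M, hM, le_trans ?_ hle⟩
      simp

/-- Reversing turns a legal transversal sequence into a legal edge sequence. -/
lemma edgeSeq_of_transversal {S : List X} (hS : IsLegalTransversalSeq E S) :
    ∃ L : List (Finset X), IsLegalEdgeSeq E L ∧ L.length = S.length := by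
  choose C hCE hmem hpriv using hS
  refine ⟨List.ofFn (fun m => C m.rev), ⟨?_, ?_⟩, by simp⟩
  · intro D hD
    obtain ⟨m, rfl⟩ := List.mem_ofFn.1 hD
    exact hCE _
  · intro i
    refine ⟨S.get (Fin.cast (by simp) i).rev, ?_, ?_⟩
    · rw [List.get_ofFn]
      exact hmem _
    · intro j hj
      rw [List.get_ofFn]
      apply hpriv
      rw [Fin.rev_lt_rev]
      simp only [Fin.lt_def, Fin.coe_cast]
      exact hj

/-- Reversing private vertices turns a legal edge sequence into a legal transversal sequence. -/
lemma transversal_of_edgeSeq {L : List (Finset X)} (hL : IsLegalEdgeSeq E L) :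
    ∃ S : List X, IsLegalTransversalSeq E S ∧ S.length = L.length := by
  choose x hx hpriv using hL.2
  refine ⟨List.ofFn (fun m => x m.rev), ?_, List.length_ofFn⟩
  intro i
  set k : Fin L.length := (Fin.cast List.length_ofFn i).rev with hk
  refine ⟨L.get k, hL.1 _ (List.get_mem L k), ?_, ?_⟩
  · rw [List.get_ofFn]
    exact hx _
  · intro j hj
    rw [List.get_ofFn]
    apply hpriv
    rw [hk, Fin.rev_lt_rev]
    simp only [Fin.lt_def, Fin.coe_cast]
    exact hj

end Aux

/-- For any hypergraph without isolated vertices, `τ_gr(H) = ρ_gr(H)`. -/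
theorem tauGr_eq_rhoGr [Fintype X] [DecidableEq X] (E : Finset (Finset X))
    (hiso : ∀ x : X, ∃ C ∈ E, x ∈ C) :
    tauGr E = rhoGr E := by
  have hbddR : BddAbove {n | ∃ L : List (Finset X), IsEdgeCoverSeq E L ∧ L.length = n} := by
    refine ⟨Fintype.card X, ?_⟩
    rintro n ⟨L, hL, rfl⟩
    exact legal_length_le hL.1
  have hbddT : BddAbove {n | ∃ S : List X, IsLegalTransversalSeq E S ∧ S.length = n} := by
    refine ⟨Fintype.card X, ?_⟩
    rintro n ⟨S, hS, rfl⟩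
    exact transversal_length_le hS
  have hnilT : IsLegalTransversalSeq E ([] : List X) := fun i => i.elim0
  have hnilL : IsLegalEdgeSeq E ([] : List (Finset X)) :=
    ⟨by simp, fun i => i.elim0⟩
  have hneR : {n | ∃ L : List (Finset X), IsEdgeCoverSeq E L ∧ L.length = n}.Nonempty := by
    obtain ⟨M, hM, -⟩ := extend_to_cover hiso _ ([] : List (Finset X)) hnilL rfl
    exact ⟨M.length, M, hM, rfl⟩
  have hneT : {n | ∃ S : List X, IsLegalTransversalSeq E S ∧ S.length = n}.Nonempty :=
    ⟨0, ⟨([] : List X), hnilT, rfl⟩⟩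
  apply le_antisymm
  · unfold tauGr
    apply csSup_le hneT
    rintro n ⟨S, hS, rfl⟩
    obtain ⟨L, hL, hlen⟩ := edgeSeq_of_transversal hS
    obtain ⟨M, hM, hle⟩ := extend_to_cover hiso _ L hL rfl
    calc S.length = L.length := hlen.symm
      _ ≤ M.length := hle
      _ ≤ rhoGr E := le_csSup hbddR ⟨M, hM, rfl⟩
  · unfold rhoGr
    apply csSup_le hneR
    rintro n ⟨L, hL, rfl⟩
    obtain ⟨S, hS, hlen⟩ := transversal_of_edgeSeq hL.1
    calc L.length = S.length := hlen.symm
      _ ≤ tauGr E := le_csSup hbddT ⟨S, hS, rfl⟩
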